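/- Under the sectoriality assumption on 𝒜 and with α = 1/2, the matrix A = [[0,I],[−𝒜,−ρ𝒜^{1/2}]] with D(A) = E₁ × E_{1/2} on X = E_{1/2} × E satisfies: for all (φ,ψ) ∈ X, ‖A^{-1}(φ,ψ)‖_X ≍_ρ ‖φ‖_E + ‖𝒜^{-1/2}ψ‖_E. Consequently the extrapolation space X_{-1} (completion of X in the norm ‖A^{-1}·‖_X) is isomorphic to E × E_{-1/2}. -/
import Mathlib


open Real

/-- **Norm equivalence defining the extrapolation space `X₋₁ ≅ E × E_{-1/2}` for the damped
wave/plate generator with `α = 1/2`:** for `A = [[0,I],[−𝒜,−ρ𝒜^{1/2}]]` on `X = E_{1/2} × E`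
(norm `‖(φ,ψ)‖_X = ‖𝒜^{1/2}φ‖ + ‖ψ‖`, realized via the fractional power scale `Ap θ = 𝒜^θ`),
one has `‖A⁻¹(φ,ψ)‖_X ≍_ρ ‖φ‖_E + ‖𝒜^{-1/2}ψ‖_E`, with `A⁻¹ = [[−ρ𝒜^{-1/2}, −𝒜⁻¹],[I,0]]`. -/
theorem damped_matrix_extrapolation_norm_equiv
    {Z : Type*} [NormedAddCommGroup Z] [NormedSpace ℂ Z] [CompleteSpace Z]
    (Ap : ℝ → Z ≃L[ℂ] Z)
    (hAp0 : Ap 0 = ContinuousLinearEquiv.refl ℂ Z)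
    (hApAdd : ∀ s t : ℝ, ∀ x : Z, Ap (s + t) x = Ap s (Ap t x))
    (φ : ℝ) (hφ : 0 < φ ∧ φ < π / 2) (M : ℝ)
    (hsect : ∀ lam : ℂ, lam ≠ 0 → |lam.arg| ≤ π - φ →
      ∃ Rl : Z →L[ℂ] Z, (∀ x, lam • Rl x + Ap 1 (Rl x) = x) ∧
        (∀ x, Rl (lam • x + Ap 1 x) = x) ∧ ‖lam‖ * ‖Rl‖ ≤ M)
    (ρ : ℝ) (hρ : 2 * Real.cos ((π - φ) / 2) < ρ) :
    ∃ c C : ℝ, 0 < c ∧ 0 < C ∧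
      ∀ x y : Z,  -- `(x,y) ∈ X = E_{1/2} × E`
        c * (‖x‖ + ‖Ap (-(1/2)) y‖) ≤
            ‖Ap (1/2) (-((ρ : ℂ) • Ap (-(1/2)) x) - (Ap 1).symm y)‖ + ‖x‖ ∧
        ‖Ap (1/2) (-((ρ : ℂ) • Ap (-(1/2)) x) - (Ap 1).symm y)‖ + ‖x‖ ≤
            C * (‖x‖ + ‖Ap (-(1/2)) y‖) := by

  have hρ0 : 0 < ρ := by
    have hc : 0 < Real.cos ((π - φ) / 2) := by
      apply Real.cos_pos_of_mem_Ioo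
      constructor
      · nlinarith [hφ.1, hφ.2, Real.pi_pos]
      · nlinarith [hφ.1, hφ.2, Real.pi_pos]
    linarith
  refine ⟨1/(ρ+1), ρ+1, by positivity, by linarith, ?_⟩
  intro x y
  have key : Ap (1/2) (-((ρ : ℂ) • Ap (-(1/2)) x) - (Ap 1).symm y)
      = -((ρ : ℂ) • x) - Ap (-(1/2)) y := by
    have h1 : Ap (1/2) (Ap (-(1/2)) x) = x := by
      rw [← hApAdd]
      norm_num [hAp0]
    have h2 : Ap (1/2) ((Ap 1).symm y) = Ap (-(1/2)) y := by
      have : Ap (-(1/2)) y = Ap (-(1/2)) (Ap 1 ((Ap 1).symm y)) := by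
        rw [(Ap 1).apply_symm_apply]
      rw [this, ← hApAdd]
      norm_num
    rw [map_sub, map_neg, map_smul, h1, h2]
  rw [key]
  set w := Ap (-(1/2)) y with hw
  have h3 : ‖-((ρ : ℂ) • x) - w‖ ≤ ρ * ‖x‖ + ‖w‖ := by
    calc ‖-((ρ : ℂ) • x) - w‖ ≤ ‖-((ρ : ℂ) • x)‖ + ‖w‖ := norm_sub_le _ _
    _ = ρ * ‖x‖ + ‖w‖ := by
        rw [norm_neg, norm_smul, Complex.norm_real, Real.norm_eq_abs,
          abs_of_pos hρ0]
  have h4 : ‖w‖ ≤ ‖-((ρ : ℂ) • x) - w‖ + ρ * ‖x‖ := by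
    have : ‖w‖ = ‖(-((ρ : ℂ) • x) - w) + (ρ : ℂ) • x‖ := by
      rw [← norm_neg w]; congr 1; abel
    rw [this]
    calc ‖(-((ρ : ℂ) • x) - w) + (ρ : ℂ) • x‖
        ≤ ‖-((ρ : ℂ) • x) - w‖ + ‖(ρ : ℂ) • x‖ := norm_add_le _ _
      _ = ‖-((ρ : ℂ) • x) - w‖ + ρ * ‖x‖ := by
          rw [norm_smul, Complex.norm_real, Real.norm_eq_abs, abs_of_pos hρ0]
  have hx : (0:ℝ) ≤ ‖x‖ := norm_nonneg _
  have hwn : (0:ℝ) ≤ ‖w‖ := norm_nonneg _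
  have hn : (0:ℝ) ≤ ‖-((ρ : ℂ) • x) - w‖ := norm_nonneg _
  constructor
  · rw [div_mul_eq_mul_div, div_le_iff₀ (by linarith)]
    nlinarith
  · nlinarith
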